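/- The two-variable real polynomial B(p,q) = (q − (345/4)p² − 231p − 104)² − (p + 1)³(75p + 104)² is irreducible in the polynomial ring ℝ[p,q]. -/

import Mathlib

open MvPolynomial

/-- The polynomial `B(p,q) = (q − (345/4)p² − 231p − 104)² − (p + 1)³(75p + 104)²`
in `ℝ[p,q]`, with `X 0 = p` and `X 1 = q`. -/
noncomputable def Bpoly : MvPolynomial (Fin 2) ℝ :=
  (X 1 - C (345 / 4 : ℝ) * X 0 ^ 2 - C (231 : ℝ) * X 0 - C (104 : ℝ)) ^ 2 -
    (X 0 + C (1 : ℝ)) ^ 3 * (C (75 : ℝ) * X 0 + C (104 : ℝ)) ^ 2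

/-- The algebra isomorphism `ℝ[p,q] ≃ (ℝ[p])[q]` sending `X 0` to `C X` and `X 1` to `X`. -/
noncomputable def toPoly : MvPolynomial (Fin 2) ℝ ≃ₐ[ℝ] Polynomial (Polynomial ℝ) :=
  (renameEquiv ℝ (Equiv.swap 0 1)).trans <|
    (finSuccEquiv ℝ 1).trans <|
      Polynomial.mapAlgEquiv
        ((renameEquiv ℝ (Equiv.equivPUnit.{1,1} (Fin 1))).trans (pUnitAlgEquiv ℝ))

lemma toPoly_X0 : toPoly (X 0) = Polynomial.C Polynomial.X := by
  rw [toPoly]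
  simp only [AlgEquiv.trans_apply, renameEquiv_apply, rename_X]
  rw [show (X ((Equiv.swap (0:Fin 2) 1) 0) : MvPolynomial (Fin 2) ℝ) = X ((0 : Fin 1).succ)
    from rfl, finSuccEquiv_X_succ, Polynomial.coe_mapAlgEquiv, Polynomial.map_C]
  simp

lemma toPoly_X1 : toPoly (X 1) = Polynomial.X := by
  rw [toPoly]
  simp only [AlgEquiv.trans_apply, renameEquiv_apply, rename_X]
  rw [show ((Equiv.swap (0:Fin 2) 1) 1) = 0 from rfl, finSuccEquiv_X_zero,
    Polynomial.coe_mapAlgEquiv, Polynomial.map_X]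

lemma toPoly_C (r : ℝ) : toPoly (C r) = Polynomial.C (Polynomial.C r) := by
  rw [show (C r : MvPolynomial (Fin 2) ℝ) = algebraMap ℝ _ r from rfl, AlgEquiv.commutes]
  simp [Polynomial.algebraMap_apply]

noncomputable def fpoly : Polynomial ℝ :=
  Polynomial.C (345/4) * Polynomial.X ^ 2 + Polynomial.C 231 * Polynomial.X + Polynomial.C 104

noncomputable def gpoly : Polynomial ℝ :=
  (Polynomial.X + Polynomial.C 1) ^ 3 * (Polynomial.C 75 * Polynomial.X + Polynomial.C 104) ^ 2

noncomputable def Ppoly : Polynomial (Polynomial ℝ) :=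
  (Polynomial.X - Polynomial.C fpoly) ^ 2 - Polynomial.C gpoly

lemma toPoly_Bpoly : toPoly Bpoly = Ppoly := by
  rw [Bpoly, Ppoly, fpoly, gpoly]
  simp only [map_sub, map_add, map_mul, map_pow, toPoly_X0, toPoly_X1, toPoly_C]
  ring

lemma gpoly_eval : gpoly.eval (-6/5) = -196/125 := by
  rw [gpoly]; simp; norm_num

lemma Ppoly_monic : Ppoly.Monic := by
  rw [Ppoly, sub_eq_add_neg]
  refine ((Polynomial.monic_X_sub_C fpoly).pow 2).add_of_left ?_
  rw [Polynomial.degree_pow, Polynomial.degree_X_sub_C, Polynomial.degree_neg]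
  exact lt_of_le_of_lt Polynomial.degree_C_le (by norm_num)

lemma gpoly_not_sq (h : Polynomial ℝ) : h ^ 2 ≠ gpoly := by
  intro he
  have := congrArg (Polynomial.eval (-6/5 : ℝ)) he
  rw [Polynomial.eval_pow, gpoly_eval] at this
  nlinarith [sq_nonneg (h.eval (-6/5 : ℝ)), this]

lemma Ppoly_natDegree : Ppoly.natDegree = 2 := by
  have hdeg : Ppoly.degree = 2 := by
    rw [Ppoly]
    rw [Polynomial.degree_sub_eq_left_of_degree_lt]
    · rw [Polynomial.degree_pow, Polynomial.degree_X_sub_C]; rfl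
    · rw [Polynomial.degree_pow, Polynomial.degree_X_sub_C]
      exact lt_of_le_of_lt Polynomial.degree_C_le (by norm_num)
  exact Polynomial.natDegree_eq_of_degree_eq_some hdeg

lemma Ppoly_irreducible : Irreducible Ppoly := by
  rw [Ppoly_monic.irreducible_iff_irreducible_map_fraction_map (K := RatFunc ℝ)]
  set A := algebraMap (Polynomial ℝ) (RatFunc ℝ) with hA
  have hmap : Ppoly.map A = (Polynomial.X - Polynomial.C (A fpoly)) ^ 2
      - Polynomial.C (A gpoly) := by
    rw [Ppoly]
    simp [Polynomial.Monic.def]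
  have hmonic := Ppoly_monic.map A
  have hnd : (Ppoly.map A).natDegree = 2 := by
    rw [Ppoly_monic.natDegree_map, Ppoly_natDegree]
  rw [Polynomial.irreducible_iff_roots_eq_zero_of_degree_le_three (by omega) (by omega)]
  rw [Multiset.eq_zero_iff_forall_notMem]
  intro r hr
  rw [Polynomial.mem_roots hmonic.ne_zero, Polynomial.IsRoot, hmap] at hr
  simp only [Polynomial.eval_sub, Polynomial.eval_pow, Polynomial.eval_X,
    Polynomial.eval_C] at hr
  set s : RatFunc ℝ := r - A fpoly with hs
  have hsq : s ^ 2 = A gpoly := by rw [hs]; linear_combination hr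
  have hint : IsIntegral (Polynomial ℝ) s := by
    refine ⟨Polynomial.X ^ 2 - Polynomial.C gpoly, ?_, ?_⟩
    · apply Polynomial.monic_X_pow_sub_C _ (by norm_num)
    · simp [Polynomial.eval₂_sub, hsq, hA]
  obtain ⟨h, hh⟩ := IsIntegrallyClosed.isIntegral_iff.mp hint
  have : A (h ^ 2) = A gpoly := by rw [map_pow, hh, hsq]
  exact gpoly_not_sq h (IsFractionRing.injective (Polynomial ℝ) (RatFunc ℝ) this)

theorem Bpoly_irreducible : Irreducible Bpoly := by
  have h := Ppoly_irreducible
  rw [← toPoly_Bpoly] at h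
  exact (MulEquiv.irreducible_iff toPoly).mp h
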